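/- Let 𝒳 = {G_x ξ + c_x : A_x ξ = b_x, ξ ∈ 𝒞_x} ⊆ ℝⁿ and 𝒴 = {G_y η + c_y : A_y η = b_y, η ∈ 𝒞_y} ⊆ ℝⁿ be constrained convex generators. Then the intersection 𝒳 ∩ 𝒴 equals the constrained convex generator {G_x ξ + c_x : A_x ξ = b_x, A_y η = b_y, G_x ξ − G_y η = c_y − c_x, ξ ∈ 𝒞_x, η ∈ 𝒞_y}, i.e., the set of points G_x ξ + c_x over all pairs (ξ, η) ∈ 𝒞_x × 𝒞_y satisfying A_x ξ = b_x, A_y η = b_y, and G_x ξ − G_y η = c_y − c_x. -/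
import Mathlib


open Matrix Set

/-- Intersection of two constrained convex generators (Proposition 2, intersection). -/
theorem ccg_intersection {n ngx ngy ncx ncy : ℕ}
    (Gx : Matrix (Fin n) (Fin ngx) ℝ) (cx : Fin n → ℝ)
    (Ax : Matrix (Fin ncx) (Fin ngx) ℝ) (bx : Fin ncx → ℝ) (Cx : Set (Fin ngx → ℝ))
    (Gy : Matrix (Fin n) (Fin ngy) ℝ) (cy : Fin n → ℝ)
    (Ay : Matrix (Fin ncy) (Fin ngy) ℝ) (bY : Fin ncy → ℝ) (Cy : Set (Fin ngy → ℝ)) :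
    {z | ∃ ξ ∈ Cx, Ax.mulVec ξ = bx ∧ z = Gx.mulVec ξ + cx}
      ∩ {z | ∃ η ∈ Cy, Ay.mulVec η = bY ∧ z = Gy.mulVec η + cy}
      = {z | ∃ ξ ∈ Cx, ∃ η ∈ Cy, Ax.mulVec ξ = bx ∧ Ay.mulVec η = bY ∧
            Gx.mulVec ξ - Gy.mulVec η = cy - cx ∧ z = Gx.mulVec ξ + cx} := by
  ext z
  constructor
  · rintro ⟨⟨ξ, hξ, hAx, rfl⟩, ⟨η, hη, hAy, hz⟩⟩
    refine ⟨ξ, hξ, η, hη, hAx, hAy, ?_, rfl⟩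
    have : Gx.mulVec ξ + cx = Gy.mulVec η + cy := hz
    funext i
    have := congrFun this i
    simp [Pi.add_apply, Pi.sub_apply] at *
    linarith
  · rintro ⟨ξ, hξ, η, hη, hAx, hAy, hdiff, rfl⟩
    refine ⟨⟨ξ, hξ, hAx, rfl⟩, η, hη, hAy, ?_⟩
    funext i
    have := congrFun hdiff i
    simp [Pi.add_apply, Pi.sub_apply] at *
    linarith
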